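/- Let λ ∈ ℂ with |λ| = 1 and let l ∈ ℕ, l ≥ 1. Define Ω_λ(m) = min_{2 ≤ k ≤ m} |λᵏ − λ| for m ≥ 2. Then Ω_{λˡ}(m) ≥ Ω_λ((m−1)l + 1) for all m ≥ 2. Consequently, if λ is a Bruno number then so is λˡ. -/

import Mathlib

open Topology Filter

/-- `Ω_λ(m) = min_{2 ≤ k ≤ m} |λᵏ − λ|`. -/
noncomputable def Omega (lam : ℂ) (m : ℕ) : ℝ :=
  sInf ((fun k : ℕ => ‖lam ^ k - lam‖) '' Set.Icc 2 m)

/-- `λ` (of modulus one) is a Bruno number: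
`Σ_{k≥1} 2^{−k} log(1/Ω_λ(2^{k+1})) < +∞`. -/
def IsBruno (lam : ℂ) : Prop :=
  ‖lam‖ = 1 ∧
    Summable (fun j : ℕ => ((1 : ℝ) / 2) ^ (j + 1) * Real.log (1 / Omega lam (2 ^ (j + 2))))

lemma omegaSet_bddBelow (lam : ℂ) (m : ℕ) :
    BddBelow ((fun k : ℕ => ‖lam ^ k - lam‖) '' Set.Icc 2 m) := by
  refine ⟨0, ?_⟩
  rintro x ⟨k, -, rfl⟩
  exact norm_nonneg _

lemma omegaSet_nonempty (lam : ℂ) {m : ℕ} (hm : 2 ≤ m) :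
    ((fun k : ℕ => ‖lam ^ k - lam‖) '' Set.Icc 2 m).Nonempty :=
  ⟨_, ⟨2, ⟨le_refl 2, hm⟩, rfl⟩⟩

lemma omega_le (lam : ℂ) {m k : ℕ} (hk2 : 2 ≤ k) (hkm : k ≤ m) :
    Omega lam m ≤ ‖lam ^ k - lam‖ :=
  csInf_le (omegaSet_bddBelow lam m) ⟨k, ⟨hk2, hkm⟩, rfl⟩

lemma omega_nonneg (lam : ℂ) {m : ℕ} (hm : 2 ≤ m) : 0 ≤ Omega lam m :=
  le_csInf (omegaSet_nonempty lam hm) (by rintro x ⟨k, -, rfl⟩; exact norm_nonneg _)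

lemma omega_anti (lam : ℂ) {m n : ℕ} (hm : 2 ≤ m) (hmn : m ≤ n) :
    Omega lam n ≤ Omega lam m := by
  apply csInf_le_csInf (omegaSet_bddBelow lam n) (omegaSet_nonempty lam hm)
  exact Set.image_mono (Set.Icc_subset_Icc_right hmn)

lemma omega_le_two (lam : ℂ) (hmod : ‖lam‖ = 1) {m : ℕ} (hm : 2 ≤ m) :
    Omega lam m ≤ 2 := by
  refine le_trans (omega_le lam le_rfl hm) ?_
  calc ‖lam ^ 2 - lam‖ ≤ ‖lam ^ 2‖ + ‖lam‖ :=
        norm_sub_le _ _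
    _ = 2 := by rw [norm_pow, hmod]; norm_num

lemma omega_pos (lam : ℂ) {m : ℕ} (hm : 2 ≤ m)
    (h : ∀ k, 2 ≤ k → lam ^ k ≠ lam) : 0 < Omega lam m := by
  have hfin : ((fun k : ℕ => ‖lam ^ k - lam‖) '' Set.Icc 2 m).Finite :=
    (Set.finite_Icc 2 m).image _
  have hmem := (omegaSet_nonempty lam hm).csInf_mem hfin
  obtain ⟨k, ⟨hk2, -⟩, heq⟩ := hmem
  rw [Omega, ← heq]
  exact norm_pos_iff.2 (sub_ne_zero.2 (h k hk2))

lemma key_ineq (lam : ℂ) (hmod : ‖lam‖ = 1) (l : ℕ) (hl : 1 ≤ l) :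
    ∀ m : ℕ, 2 ≤ m → Omega lam ((m - 1) * l + 1) ≤ Omega (lam ^ l) m := by
  intro m hm
  apply csInf_le_csInf (omegaSet_bddBelow lam _) (omegaSet_nonempty _ hm)
  rintro x ⟨k, ⟨hk2, hkm⟩, rfl⟩
  obtain ⟨t, rfl⟩ : ∃ t, l = t + 1 := ⟨l - 1, by omega⟩
  obtain ⟨r, rfl⟩ : ∃ r, k = r + 2 := ⟨k - 2, by omega⟩
  refine ⟨(t + 1) * (r + 1) + 1, ⟨by nlinarith, ?_⟩, ?_⟩
  · have h1 : r + 1 ≤ m - 1 := by omega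
    have := Nat.mul_le_mul_left (t + 1) h1
    have h2 : (t + 1) * (m - 1) = (m - 1) * (t + 1) := by ring
    omega
  · have hexp : (t + 1) * (r + 2) = t + ((t + 1) * (r + 1) + 1) := by ring
    have hfac : (lam ^ (t + 1)) ^ (r + 2) - lam ^ (t + 1)
        = lam ^ t * (lam ^ ((t + 1) * (r + 1) + 1) - lam) := by
      rw [mul_sub, ← pow_add, ← pow_mul, hexp, ← pow_succ]
    simp only
    rw [hfac, norm_mul, norm_pow, hmod, one_pow, one_mul]

lemma two_le_pow (j : ℕ) : (2 : ℕ) ≤ 2 ^ (j + 2) :=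
  le_trans (by norm_num) (Nat.pow_le_pow_right (by norm_num) (by omega) : 2 ^ 2 ≤ 2 ^ (j + 2))

/-- lower bound for the log in one Bruno term. -/
lemma log_lower (mu : ℂ) (hmod : ‖mu‖ = 1) (i : ℕ)
    (hp : 0 < Omega mu (2 ^ (i + 2))) :
    -Real.log 2 ≤ Real.log (1 / Omega mu (2 ^ (i + 2))) := by
  have h2' : Omega mu (2 ^ (i + 2)) ≤ 2 := omega_le_two mu hmod (two_le_pow i)
  have hlog2 : Real.log (1 / 2) ≤ Real.log (1 / Omega mu (2 ^ (i + 2))) := by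
    apply Real.log_le_log (one_div_pos.2 (by norm_num))
    exact one_div_le_one_div_of_le hp h2'
  rwa [one_div (2:ℝ), Real.log_inv] at hlog2

/-- For `|λ| = 1` and `l ≥ 1` one has `Ω_{λˡ}(m) ≥ Ω_λ((m−1)l + 1)` for all `m ≥ 2`;
consequently, if `λ` is a Bruno number then so is `λˡ`. -/
theorem bruno_pow (lam : ℂ) (hmod : ‖lam‖ = 1) (l : ℕ) (hl : 1 ≤ l) :
    (∀ m : ℕ, 2 ≤ m → Omega lam ((m - 1) * l + 1) ≤ Omega (lam ^ l) m) ∧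
    (IsBruno lam → IsBruno (lam ^ l)) := by
  refine ⟨key_ineq lam hmod l hl, ?_⟩
  rintro ⟨-, hsum⟩
  have hmodl : ‖lam ^ l‖ = 1 := by rw [norm_pow, hmod, one_pow]
  refine ⟨hmodl, ?_⟩
  by_cases hroot : ∃ k, 2 ≤ k ∧ lam ^ k = lam
  · -- root-of-unity case: terms vanish eventually
    obtain ⟨k, hk2, hk⟩ := hroot
    apply summable_of_ne_finset_zero (s := Finset.range k)
    intro j hj
    have hjk : k ≤ 2 ^ (j + 2) := by
      have hkj : k ≤ j := by simpa using hj
      have : k < 2 ^ (j + 2) := calc k ≤ j := hkj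
        _ < 2 ^ j := Nat.lt_two_pow_self
        _ ≤ 2 ^ (j + 2) := Nat.pow_le_pow_right (by norm_num) (by omega)
      exact this.le
    have hpow : (lam ^ l) ^ k = lam ^ l := by
      rw [← pow_mul, mul_comm, pow_mul, hk]
    have h0 : Omega (lam ^ l) (2 ^ (j + 2)) = 0 := by
      refine le_antisymm ?_ (omega_nonneg _ (two_le_pow j))
      have := omega_le (lam ^ l) hk2 hjk
      rwa [hpow, sub_self, norm_zero] at this
    rw [h0]
    simp
  · push_neg at hroot
    have h2base : ∀ j : ℕ, (2 : ℕ) ≤ (2 ^ (j + 2) - 1) * l + 1 := by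
      intro j
      have h4 := two_le_pow j
      have : 1 ≤ (2 ^ (j + 2) - 1) * l :=
        Nat.one_le_iff_ne_zero.2 (Nat.mul_ne_zero (by omega) (by omega))
      omega
    have hposl : ∀ j : ℕ, 0 < Omega (lam ^ l) (2 ^ (j + 2)) := fun j =>
      lt_of_lt_of_le (omega_pos lam (h2base j) fun k hk2 => hroot k hk2)
        (key_ineq lam hmod l hl _ (two_le_pow j))
    have hpos : ∀ j : ℕ, 0 < Omega lam (2 ^ (j + 2)) := fun j =>
      omega_pos lam (two_le_pow j) fun k hk2 => hroot k hk2
    have hcomp : ∀ j : ℕ, Omega lam (2 ^ (j + l + 2)) ≤ Omega (lam ^ l) (2 ^ (j + 2)) := by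
      intro j
      refine le_trans ?_ (key_ineq lam hmod l hl _ (two_le_pow j))
      apply omega_anti lam (h2base j)
      have hll : l ≤ 2 ^ l := le_of_lt (Nat.lt_two_pow_self)
      calc (2 ^ (j + 2) - 1) * l + 1
            ≤ (2 ^ (j + 2) - 1) * l + l := by omega
        _ = ((2 ^ (j + 2) - 1) + 1) * l := by ring
        _ = 2 ^ (j + 2) * l := by
            rw [Nat.sub_add_cancel (le_trans (by norm_num) (two_le_pow j))]
        _ ≤ 2 ^ (j + 2) * 2 ^ l := Nat.mul_le_mul_left _ hll
        _ = 2 ^ (j + l + 2) := by rw [← pow_add]; ring_nf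
    set f : ℕ → ℝ := fun j => ((1 : ℝ) / 2) ^ (j + 1) *
      Real.log (1 / Omega (lam ^ l) (2 ^ (j + 2))) with hf
    set g : ℕ → ℝ := fun j => ((1 : ℝ) / 2) ^ (j + 1) *
      Real.log (1 / Omega lam (2 ^ (j + 2))) with hg
    set c : ℕ → ℝ := fun j => ((1 : ℝ) / 2) ^ (j + 1) * Real.log 2 with hcdef
    have hsum' : Summable fun j => g (j + l) := (summable_nat_add_iff l).2 hsum
    have hh : Summable fun j => (2 : ℝ) ^ l * g (j + l) := hsum'.mul_left _
    have hc : Summable c := by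
      have : Summable fun j : ℕ => ((1 : ℝ) / 2) ^ j * ((1 / 2) * Real.log 2) :=
        summable_geometric_two.mul_right _
      exact this.congr fun j => by rw [hcdef]; simp only; rw [pow_succ]; ring
    have hrw : ∀ j, (2 : ℝ) ^ l * g (j + l) = ((1 : ℝ) / 2) ^ (j + 1) *
        Real.log (1 / Omega lam (2 ^ (j + l + 2))) := by
      intro j
      simp only [hg]
      rw [show j + l + 1 = l + (j + 1) by ring, pow_add, div_pow, one_pow]
      field_simp
    have hup : ∀ j, f j ≤ (2 : ℝ) ^ l * g (j + l) := by
      intro j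
      have hlog : Real.log (1 / Omega (lam ^ l) (2 ^ (j + 2)))
          ≤ Real.log (1 / Omega lam (2 ^ (j + l + 2))) := by
        apply Real.log_le_log (one_div_pos.2 (hposl j))
        exact one_div_le_one_div_of_le (hpos (j + l)) (hcomp j)
      rw [hrw j, hf]
      exact mul_le_mul_of_nonneg_left hlog (by positivity)
    have hlowf : ∀ j, -(c j) ≤ f j := by
      intro j
      have h3 := log_lower (lam ^ l) hmodl j (hposl j)
      calc -(c j) = ((1 : ℝ) / 2) ^ (j + 1) * (-Real.log 2) := by rw [hcdef]; ring
        _ ≤ f j := mul_le_mul_of_nonneg_left h3 (by positivity)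
    have hlowh : ∀ j, -(c j) ≤ (2 : ℝ) ^ l * g (j + l) := by
      intro j
      have h3 := log_lower lam hmod (j + l) (hpos (j + l))
      rw [hrw j]
      calc -(c j) = ((1 : ℝ) / 2) ^ (j + 1) * (-Real.log 2) := by rw [hcdef]; ring
        _ ≤ _ := mul_le_mul_of_nonneg_left h3 (by positivity)
    have hcnn : ∀ j, 0 ≤ c j := by
      intro j
      rw [hcdef]
      exact mul_nonneg (by positivity) (Real.log_nonneg (by norm_num))
    have habs : ∀ j, |f j| ≤ (2 : ℝ) ^ l * g (j + l) + 2 * c j := by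
      intro j
      rw [abs_le]
      constructor
      · have := hlowf j
        have := hlowh j
        have := hcnn j
        linarith
      · have := hup j
        have := hcnn j
        linarith
    have hB : Summable fun j => (2 : ℝ) ^ l * g (j + l) + 2 * c j :=
      hh.add (hc.mul_left 2)
    exact (Summable.of_nonneg_of_le (fun j => abs_nonneg _) habs hB).of_abs
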